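/- For every positive integer r, there exists a finite set of n = 2^r points x_1, ..., x_n in a Euclidean space, such that, defining the similarity matrix S ∈ {±1}^{n×n} by S_ij = 1 if ‖x_i − x_j‖ ≤ 1 and S_ij = −1 otherwise, the following two properties hold: (a) there exist matrices U, V ∈ {±1}^{2r×n} (with columns u_1,...,u_n and v_1,...,v_n) and a threshold θ ∈ ℝ such that S_ij·(⟨u_i, v_j⟩ − θ) > 0 for all 1 ≤ i, j ≤ n; and (b) for every positive integer k, every matrix U ∈ {±1}^{k×n} (with columns u_1,...,u_n), and every θ ∈ ℝ such that S_ij·(⟨u_i, u_j⟩ − θ) > 0 for all 1 ≤ i, j ≤ n, one must have k ≥ 2^r / 2. -/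

import Mathlib

open Finset

private lemma sum_split (M : ℕ) (f : ℕ → ℝ) :
    ∑ t ∈ range (2*M), f t = (∑ t ∈ range M, f t) + ∑ t ∈ Ico M (2*M), f t := by
  rw [range_eq_Ico, ← Finset.sum_Ico_consecutive f (Nat.zero_le M) (by omega), ← range_eq_Ico]

private lemma sum_ind_lo (M : ℕ) (c : ℝ) :
    ∑ t ∈ range (2*M), (if t < M then c else 0) = M * c := by
  rw [sum_split]
  rw [Finset.sum_congr rfl (fun t ht => if_pos (mem_range.mp ht)),
      Finset.sum_congr rfl (fun t ht => if_neg (by have := (mem_Ico.mp ht).1; omega))]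
  simp [mul_comm]

private lemma sum_ind_hi (M : ℕ) (c : ℝ) :
    ∑ t ∈ range (2*M), (if t < M then 0 else c) = M * c := by
  rw [sum_split]
  rw [Finset.sum_congr rfl (fun t ht => if_pos (mem_range.mp ht)),
      Finset.sum_congr rfl (fun t ht => if_neg (by have := (mem_Ico.mp ht).1; omega))]
  rw [Finset.sum_const, Finset.sum_const, Nat.card_Ico, show 2*M - M = M by omega]
  simp [mul_comm]

private noncomputable def gfun (M i t : ℕ) : ℝ :=
  (if t = i then 1 else 0) - (if ((t < M) ↔ (i < M)) then (M:ℝ)⁻¹ else 0)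

private lemma ip_eq (M : ℕ) (hM : 1 ≤ M) (i j : ℕ) (hi : i < 2*M) (hj : j < 2*M) :
    ∑ t ∈ range (2*M), gfun M i t * gfun M j t
      = (if i = j then 1 else 0) - (if ((i < M) ↔ (j < M)) then (M:ℝ)⁻¹ else 0) := by
  have hM0 : (M:ℝ) ≠ 0 := Nat.cast_ne_zero.mpr (by omega)
  have expand : ∀ t, gfun M i t * gfun M j t
      = (if t = i then (1:ℝ) else 0) * (if t = j then 1 else 0)
        - (if t = i then (1:ℝ) else 0) * (if ((t < M) ↔ (j < M)) then (M:ℝ)⁻¹ else 0)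
        - (if ((t < M) ↔ (i < M)) then (M:ℝ)⁻¹ else 0) * (if t = j then (1:ℝ) else 0)
        + (if ((t < M) ↔ (i < M)) then (M:ℝ)⁻¹ else 0) * (if ((t < M) ↔ (j < M)) then (M:ℝ)⁻¹ else 0) := by
    intro t; unfold gfun; ring
  rw [Finset.sum_congr rfl (fun t _ => expand t)]
  rw [Finset.sum_add_distrib, Finset.sum_sub_distrib, Finset.sum_sub_distrib]
  have SAC : ∑ t ∈ range (2*M), (if t = i then (1:ℝ) else 0) * (if t = j then 1 else 0)
      = if i = j then 1 else 0 := by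
    rw [Finset.sum_congr rfl (fun t _ => by rw [ite_mul, one_mul, zero_mul])]
    rw [Finset.sum_ite_eq' (range (2*M)) i (fun t => if t = j then (1:ℝ) else 0)]
    rw [if_pos (mem_range.mpr hi)]
  have SAD : ∑ t ∈ range (2*M), (if t = i then (1:ℝ) else 0) * (if ((t < M) ↔ (j < M)) then (M:ℝ)⁻¹ else 0)
      = if ((i < M) ↔ (j < M)) then (M:ℝ)⁻¹ else 0 := by
    rw [Finset.sum_congr rfl (fun t _ => by rw [ite_mul, one_mul, zero_mul])]
    rw [Finset.sum_ite_eq' (range (2*M)) i (fun t => if ((t < M) ↔ (j < M)) then (M:ℝ)⁻¹ else 0)]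
    rw [if_pos (mem_range.mpr hi)]
  have SBC : ∑ t ∈ range (2*M), (if ((t < M) ↔ (i < M)) then (M:ℝ)⁻¹ else 0) * (if t = j then (1:ℝ) else 0)
      = if ((i < M) ↔ (j < M)) then (M:ℝ)⁻¹ else 0 := by
    rw [Finset.sum_congr rfl (fun t _ => by rw [mul_ite, mul_one, mul_zero])]
    rw [Finset.sum_ite_eq' (range (2*M)) j (fun t => if ((t < M) ↔ (i < M)) then (M:ℝ)⁻¹ else 0)]
    rw [if_pos (mem_range.mpr hj)]
    exact if_congr iff_comm rfl rfl
  have SBD : ∑ t ∈ range (2*M), (if ((t < M) ↔ (i < M)) then (M:ℝ)⁻¹ else 0) * (if ((t < M) ↔ (j < M)) then (M:ℝ)⁻¹ else 0)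
      = if ((i < M) ↔ (j < M)) then (M:ℝ)⁻¹ else 0 := by
    by_cases hi' : i < M <;> by_cases hj' : j < M
    · have e : ∀ t, (if ((t < M) ↔ (i < M)) then (M:ℝ)⁻¹ else 0) * (if ((t < M) ↔ (j < M)) then (M:ℝ)⁻¹ else 0)
          = (if t < M then (M:ℝ)⁻¹ * (M:ℝ)⁻¹ else 0) := by
        intro t; by_cases h : t < M <;> simp [h, hi', hj']
      rw [Finset.sum_congr rfl (fun t _ => e t), sum_ind_lo, ← mul_assoc,
        mul_inv_cancel₀ hM0, one_mul, if_pos (by tauto)]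
    · have e : ∀ t, (if ((t < M) ↔ (i < M)) then (M:ℝ)⁻¹ else 0) * (if ((t < M) ↔ (j < M)) then (M:ℝ)⁻¹ else 0)
          = (0:ℝ) := by
        intro t; by_cases h : t < M <;> simp [h, hi', hj']
      rw [Finset.sum_congr rfl (fun t _ => e t), Finset.sum_const, if_neg (by tauto)]
      simp
    · have e : ∀ t, (if ((t < M) ↔ (i < M)) then (M:ℝ)⁻¹ else 0) * (if ((t < M) ↔ (j < M)) then (M:ℝ)⁻¹ else 0)
          = (0:ℝ) := by
        intro t; by_cases h : t < M <;> simp [h, hi', hj']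
      rw [Finset.sum_congr rfl (fun t _ => e t), Finset.sum_const, if_neg (by tauto)]
      simp
    · have e : ∀ t, (if ((t < M) ↔ (i < M)) then (M:ℝ)⁻¹ else 0) * (if ((t < M) ↔ (j < M)) then (M:ℝ)⁻¹ else 0)
          = (if t < M then 0 else (M:ℝ)⁻¹ * (M:ℝ)⁻¹) := by
        intro t; by_cases h : t < M <;> simp [h, hi', hj']
      rw [Finset.sum_congr rfl (fun t _ => e t), sum_ind_hi, ← mul_assoc,
        mul_inv_cancel₀ hM0, one_mul, if_pos (by tauto)]
  rw [SAC, SAD, SBC, SBD]; ring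


private lemma normsq_eq (M : ℕ) (hM : 1 ≤ M) (i j : ℕ) (hi : i < 2*M) (hj : j < 2*M) :
    ∑ t ∈ range (2*M), (gfun M i t - gfun M j t)^2
      = (2 - 2*(M:ℝ)⁻¹)
        - 2*((if i = j then 1 else 0) - (if ((i < M) ↔ (j < M)) then (M:ℝ)⁻¹ else 0)) := by
  have e : ∀ t, (gfun M i t - gfun M j t)^2
      = gfun M i t * gfun M i t - 2*(gfun M i t * gfun M j t) + gfun M j t * gfun M j t := by
    intro t; ring
  rw [Finset.sum_congr rfl (fun t _ => e t), Finset.sum_add_distrib, Finset.sum_sub_distrib,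
    ← Finset.mul_sum, ip_eq M hM i i hi hi, ip_eq M hM i j hi hj, ip_eq M hM j j hj hj]
  rw [if_pos rfl, if_pos rfl, if_pos Iff.rfl, if_pos Iff.rfl]
  ring

private noncomputable def bitf (i s : ℕ) : ℝ := if Nat.testBit i s then 1 else -1

private lemma bitf_pm (i s : ℕ) : bitf i s = 1 ∨ bitf i s = -1 := by
  unfold bitf; split <;> simp

private lemma bitf_mul_self (i s : ℕ) : bitf i s * bitf i s = 1 := by
  rcases bitf_pm i s with h | h <;> rw [h] <;> norm_num

private lemma bitf_mul_le (i j s : ℕ) : bitf i s * bitf j s ≤ 1 := by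
  rcases bitf_pm i s with h | h <;> rcases bitf_pm j s with h' | h' <;> rw [h, h'] <;> norm_num

private lemma bitf_mul_ge (i j s : ℕ) : -1 ≤ bitf i s * bitf j s := by
  rcases bitf_pm i s with h | h <;> rcases bitf_pm j s with h' | h' <;> rw [h, h'] <;> norm_num

private lemma B_self (r i : ℕ) : ∑ s ∈ range r, bitf i s * bitf i s = r := by
  rw [Finset.sum_congr rfl (fun s _ => bitf_mul_self i s)]
  simp

private lemma B_ge (r i j : ℕ) : -(r:ℝ) ≤ ∑ s ∈ range r, bitf i s * bitf j s := by
  calc -(r:ℝ) = ∑ s ∈ range r, (-1:ℝ) := by simp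
  _ ≤ ∑ s ∈ range r, bitf i s * bitf j s := Finset.sum_le_sum (fun s _ => bitf_mul_ge i j s)

private lemma B_le_sub2 (r i j : ℕ) (hi : i < 2 ^ r) (hj : j < 2 ^ r) (hij : i ≠ j) :
    ∑ s ∈ range r, bitf i s * bitf j s ≤ (r:ℝ) - 2 := by
  -- find a differing bit below r
  have hex : ∃ s, s ∈ range r ∧ Nat.testBit i s ≠ Nat.testBit j s := by
    by_contra hcon
    push_neg at hcon
    apply hij
    apply Nat.eq_of_testBit_eq
    intro s
    by_cases hs : s < r
    · exact hcon s (mem_range.mpr hs)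
    · have h1 : Nat.testBit i s = false :=
        Nat.testBit_lt_two_pow (lt_of_lt_of_le hi (Nat.pow_le_pow_right (by norm_num) (by omega)))
      have h2 : Nat.testBit j s = false :=
        Nat.testBit_lt_two_pow (lt_of_lt_of_le hj (Nat.pow_le_pow_right (by norm_num) (by omega)))
      rw [h1, h2]
  obtain ⟨s, hs, hne⟩ := hex
  have hterm : bitf i s * bitf j s = -1 := by
    unfold bitf
    rcases Bool.eq_false_or_eq_true (Nat.testBit i s) with h | h <;>
      rcases Bool.eq_false_or_eq_true (Nat.testBit j s) with h' | h' <;>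
        rw [h, h'] at hne ⊢ <;> simp at hne ⊢
  rw [← Finset.sum_erase_add (range r) _ hs, hterm]
  have hbound : ∑ s' ∈ (range r).erase s, bitf i s' * bitf j s' ≤ ((range r).erase s).card • (1:ℝ) :=
    Finset.sum_le_card_nsmul _ _ 1 (fun s' _ => bitf_mul_le i j s')
  rw [Finset.card_erase_of_mem hs, Finset.card_range] at hbound
  have hr1 : 1 ≤ r := by
    rcases Nat.eq_zero_or_pos r with h0 | h0
    · subst h0; simp at hi hj; omega
    · exact h0
  have : ((r - 1 : ℕ) : ℝ) = (r:ℝ) - 1 := by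
    rw [Nat.cast_sub hr1]; norm_num
  rw [nsmul_eq_mul, mul_one, this] at hbound
  linarith

/-- For every positive integer `r` there exists a set of `n = 2^r` points in a Euclidean
space such that the thresholded Euclidean similarity matrix `S` (with `S i j = 1` iff
`‖x i - x j‖ ≤ 1` and `-1` otherwise) admits an asymmetric binary code of length `2r`,
while every symmetric binary code for `S` must have length at least `2^r / 2`. -/
theorem asymmetric_vs_symmetric_code_gap (r : ℕ) (hr : 0 < r) :
    ∃ (d : ℕ) (x : Fin (2 ^ r) → EuclideanSpace ℝ (Fin d))
      (S : Fin (2 ^ r) → Fin (2 ^ r) → ℝ),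
      (∀ i j, S i j = if ‖x i - x j‖ ≤ 1 then 1 else -1) ∧
      (∃ (u v : Fin (2 ^ r) → Fin (2 * r) → ℝ) (θ : ℝ),
        (∀ i t, u i t = 1 ∨ u i t = -1) ∧
        (∀ i t, v i t = 1 ∨ v i t = -1) ∧
        (∀ i j, 0 < S i j * ((∑ t, u i t * v j t) - θ))) ∧
      (∀ (k : ℕ), 0 < k → ∀ (u : Fin (2 ^ r) → Fin k → ℝ) (θ : ℝ),
        (∀ i t, u i t = 1 ∨ u i t = -1) →
        (∀ i j, 0 < S i j * ((∑ t, u i t * u j t) - θ)) →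
        ((2 ^ r : ℝ) / 2) ≤ (k : ℝ)) := by
  classical
  set M : ℕ := 2 ^ (r - 1) with hM_def
  have hM : 1 ≤ M := Nat.one_le_two_pow
  have hn : 2 ^ r = 2 * M := by
    rw [hM_def, ← pow_succ']
    congr 1
    omega
  have hM0 : (M:ℝ) ≠ 0 := Nat.cast_ne_zero.mpr (by omega)
  have hMpos : (0:ℝ) < M := by positivity
  -- the points
  set b : ℝ := Real.sqrt (((M:ℝ)+1)/(2*M)) with hb_def
  have hb_nonneg : 0 ≤ b := Real.sqrt_nonneg _
  have hb2 : b^2 = ((M:ℝ)+1)/(2*M) := Real.sq_sqrt (by positivity)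
  set x : Fin (2 ^ r) → EuclideanSpace ℝ (Fin (2 ^ r)) :=
    (fun i => WithLp.toLp 2 (fun t => b * gfun M (i:ℕ) (t:ℕ))) with hx_def
  -- squared norms
  have key : ∀ i j : Fin (2 ^ r), ‖x i - x j‖
      = Real.sqrt (b^2 * ((2 - 2*(M:ℝ)⁻¹)
        - 2*((if (i:ℕ) = (j:ℕ) then 1 else 0)
          - (if (((i:ℕ) < M) ↔ ((j:ℕ) < M)) then (M:ℝ)⁻¹ else 0)))) := by
    intro i j
    rw [EuclideanSpace.norm_eq]
    congr 1
    have e1 : ∀ t : Fin (2 ^ r), ‖(x i - x j) t‖^2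
        = b^2 * (gfun M (i:ℕ) (t:ℕ) - gfun M (j:ℕ) (t:ℕ))^2 := by
      intro t
      have : (x i - x j) t = b * gfun M (i:ℕ) (t:ℕ) - b * gfun M (j:ℕ) (t:ℕ) := by
        simp [hx_def]
      rw [this, Real.norm_eq_abs, sq_abs]
      ring
    rw [Finset.sum_congr rfl (fun t _ => e1 t), ← Finset.mul_sum]
    congr 1
    rw [Fin.sum_univ_eq_sum_range (fun t => (gfun M (i:ℕ) t - gfun M (j:ℕ) t)^2) (2 ^ r)]
    have hrange : range (2 ^ r) = range (2*M) := by rw [hn]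
    rw [hrange, normsq_eq M hM (i:ℕ) (j:ℕ) (by rw [← hn]; exact i.isLt) (by rw [← hn]; exact j.isLt)]
  -- distance characterization
  have dist_iff : ∀ i j : Fin (2 ^ r),
      (‖x i - x j‖ ≤ 1 ↔ (i = j ∨ ¬(((i:ℕ) < M) ↔ ((j:ℕ) < M)))) := by
    intro i j
    by_cases hij : i = j
    · subst hij
      simp only [eq_self_iff_true, true_or, iff_true]
      rw [key i i, if_pos rfl, if_pos Iff.rfl,
        show b^2 * ((2 - 2*(M:ℝ)⁻¹) - 2*((1:ℝ) - (M:ℝ)⁻¹)) = 0 by ring, Real.sqrt_zero]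
      norm_num
    · have hij' : (i:ℕ) ≠ (j:ℕ) := fun h => hij (Fin.ext h)
      rw [key i j, if_neg hij']
      by_cases hsame : ((i:ℕ) < M) ↔ ((j:ℕ) < M)
      · rw [if_pos hsame]
        constructor
        · intro hle
          exfalso
          have hval : b^2 * ((2 - 2*(M:ℝ)⁻¹) - 2*((0:ℝ) - (M:ℝ)⁻¹)) = ((M:ℝ)+1)/M := by
            rw [hb2]; field_simp; ring
          rw [hval] at hle
          have h1 : (1:ℝ) < ((M:ℝ)+1)/M := by
            rw [lt_div_iff₀ hMpos]; linarith
          have h2 : Real.sqrt 1 < Real.sqrt (((M:ℝ)+1)/M) := Real.sqrt_lt_sqrt (by norm_num) h1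
          rw [Real.sqrt_one] at h2
          linarith
        · intro h
          rcases h with h | h
          · exact absurd h hij
          · exact absurd hsame h
      · rw [if_neg hsame]
        constructor
        · intro _; exact Or.inr hsame
        · intro _
          have hval : b^2 * ((2 - 2*(M:ℝ)⁻¹) - 2*((0:ℝ) - 0))
              = ((M:ℝ)*M - 1)/((M:ℝ)*M) := by
            rw [hb2]; field_simp; ring
          rw [hval]
          have hle1 : ((M:ℝ)*M - 1)/((M:ℝ)*M) ≤ 1 := by
            rw [div_le_one (by positivity)]; linarith
          calc Real.sqrt (((M:ℝ)*M - 1)/((M:ℝ)*M)) ≤ Real.sqrt 1 := Real.sqrt_le_sqrt hle1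
          _ = 1 := Real.sqrt_one
  -- similarity value lemmas
  have hS1 : ∀ i j : Fin (2 ^ r), (i = j ∨ ¬(((i:ℕ) < M) ↔ ((j:ℕ) < M))) →
      (if ‖x i - x j‖ ≤ 1 then (1:ℝ) else -1) = 1 := by
    intro i j h
    exact if_pos ((dist_iff i j).mpr h)
  have hS2 : ∀ i j : Fin (2 ^ r), i ≠ j → (((i:ℕ) < M) ↔ ((j:ℕ) < M)) →
      (if ‖x i - x j‖ ≤ 1 then (1:ℝ) else -1) = -1 := by
    intro i j hij hsame
    refine if_neg (fun hle => ?_)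
    rcases (dist_iff i j).mp hle with h | h
    · exact hij h
    · exact h hsame
  refine ⟨2 ^ r, x, fun i j => if ‖x i - x j‖ ≤ 1 then 1 else -1, fun i j => rfl, ?_, ?_⟩
  · -- asymmetric code of length 2r
    set σ : Fin (2 ^ r) → ℝ := fun i => if (i:ℕ) < M then 1 else -1 with hσ_def
    have hσpm : ∀ i, σ i = 1 ∨ σ i = -1 := by
      intro i; rw [hσ_def]; dsimp only; split <;> simp
    refine ⟨fun i t => if (t:ℕ) < r then bitf (i:ℕ) (t:ℕ) else σ i,
           fun j t => if (t:ℕ) < r then bitf (j:ℕ) (t:ℕ) else -(σ j), -1, ?_, ?_, ?_⟩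
    · intro i t; dsimp only; split
      · exact bitf_pm _ _
      · exact hσpm i
    · intro j t; dsimp only; split
      · exact bitf_pm _ _
      · rcases hσpm j with h | h <;> rw [h] <;> norm_num
    · intro i j
      beta_reduce
      have hsum : (∑ t : Fin (2*r), (if (t:ℕ) < r then bitf (i:ℕ) (t:ℕ) else σ i)
            * (if (t:ℕ) < r then bitf (j:ℕ) (t:ℕ) else -(σ j)))
          = (∑ s ∈ range r, bitf (i:ℕ) s * bitf (j:ℕ) s) + (r:ℝ) * (σ i * -(σ j)) := by
        rw [Fin.sum_univ_eq_sum_range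
          (fun s => (if s < r then bitf (i:ℕ) s else σ i) * (if s < r then bitf (j:ℕ) s else -(σ j))) (2*r)]
        rw [sum_split r]
        congr 1
        · refine Finset.sum_congr rfl (fun s hs => ?_)
          rw [if_pos (mem_range.mp hs), if_pos (mem_range.mp hs)]
        · rw [Finset.sum_congr rfl (fun s hs => by
            rw [if_neg (by have := (mem_Ico.mp hs).1; omega),
                if_neg (by have := (mem_Ico.mp hs).1; omega)])]
          rw [Finset.sum_const, Nat.card_Ico, show 2*r - r = r by omega, nsmul_eq_mul]
      rw [hsum]
      by_cases hsame : ((i:ℕ) < M) ↔ ((j:ℕ) < M)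
      · have hσσ : σ i * -(σ j) = -1 := by
          by_cases hiM : (i:ℕ) < M
          · rw [hσ_def]; dsimp only
            rw [if_pos hiM, if_pos (hsame.mp hiM)]; norm_num
          · rw [hσ_def]; dsimp only
            rw [if_neg hiM, if_neg (fun h => hiM (hsame.mpr h))]; norm_num
        rw [hσσ]
        by_cases hij : i = j
        · subst hij
          rw [hS1 i i (Or.inl rfl), B_self]
          ring_nf
          norm_num
        · rw [hS2 i j hij hsame]
          have hB : ∑ s ∈ range r, bitf (i:ℕ) s * bitf (j:ℕ) s ≤ (r:ℝ) - 2 :=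
            B_le_sub2 r (i:ℕ) (j:ℕ) i.isLt j.isLt (fun h => hij (Fin.ext h))
          nlinarith
      · have hσσ : σ i * -(σ j) = 1 := by
          by_cases hiM : (i:ℕ) < M
          · rw [hσ_def]; dsimp only
            rw [if_pos hiM, if_neg (fun h => hsame (Iff.intro (fun _ => h) (fun _ => hiM)))]
            norm_num
          · have hjM : (j:ℕ) < M := by
              by_contra hjM
              exact hsame (Iff.intro (fun h => absurd h hiM) (fun h => absurd h hjM))
            rw [hσ_def]; dsimp only
            rw [if_neg hiM, if_pos hjM]; norm_num
        rw [hσσ, hS1 i j (Or.inr hsame)]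
        have hB := B_ge r (i:ℕ) (j:ℕ)
        nlinarith
  · -- symmetric lower bound
    intro k hk u θ hu hsep
    set G : Fin (2 ^ r) → Fin (2 ^ r) → ℝ := fun i j => ∑ t, u i t * u j t with hG_def
    have hGsymm : ∀ i j, G i j = G j i := by
      intro i j; rw [hG_def]; dsimp only
      exact Finset.sum_congr rfl (fun t _ => mul_comm _ _)
    have hsim : ∀ i j : Fin (2 ^ r), (i = j ∨ ¬(((i:ℕ) < M) ↔ ((j:ℕ) < M))) → θ < G i j := by
      intro i j h
      have h0 := hsep i j
      beta_reduce at h0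
      rw [hS1 i j h, one_mul] at h0
      rw [hG_def]; dsimp only
      linarith
    have hdis : ∀ i j : Fin (2 ^ r), i ≠ j → (((i:ℕ) < M) ↔ ((j:ℕ) < M)) → G i j < θ := by
      intro i j hij h
      have h0 := hsep i j
      beta_reduce at h0
      rw [hS2 i j hij h] at h0
      rw [hG_def]; dsimp only
      nlinarith
    have hGdiag : ∀ i, G i i = (k:ℝ) := by
      intro i; rw [hG_def]; dsimp only
      have e : ∀ t ∈ (univ : Finset (Fin k)), u i t * u i t = 1 := by
        intro t _; rcases hu i t with h | h <;> rw [h] <;> norm_num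
      rw [Finset.sum_congr rfl e]
      simp
    set D : Fin (2 ^ r) → Fin (2 ^ r) → ℕ :=
      fun i j => (univ.filter (fun t => ¬ (u i t = u j t))).card with hD_def
    have hD_le : ∀ i j, D i j ≤ k := by
      intro i j
      calc D i j ≤ (univ : Finset (Fin k)).card := Finset.card_filter_le _ _
      _ = k := by simp
    have hDsymm : ∀ i j, D i j = D j i := by
      intro i j; rw [hD_def]; dsimp only
      congr 1
      ext t
      simp [eq_comm]
    have hGD : ∀ i j, G i j = (k:ℝ) - 2*(D i j) := by
      intro i j
      have hterm : ∀ t ∈ (univ : Finset (Fin k)),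
          u i t * u j t = if u i t = u j t then (1:ℝ) else -1 := by
        intro t _
        rcases hu i t with h | h <;> rcases hu j t with h' | h' <;>
          rw [h, h'] <;> norm_num
      rw [hG_def]; dsimp only
      rw [Finset.sum_congr rfl hterm, Finset.sum_ite, Finset.sum_const, Finset.sum_const]
      have hcards : (univ.filter (fun t => u i t = u j t)).card
          + (univ.filter (fun t => ¬ (u i t = u j t))).card = k := by
        rw [Finset.card_filter_add_card_filter_not]
        simp
      have hDval : D i j = (univ.filter (fun t => ¬ (u i t = u j t))).card := rfl
      rw [nsmul_eq_mul, nsmul_eq_mul, mul_one, hDval]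
      have : ((univ.filter (fun t => u i t = u j t)).card : ℝ)
          = (k:ℝ) - ((univ.filter (fun t => ¬ (u i t = u j t))).card : ℝ) := by
        have := hcards
        push_cast [← this]
        ring
      rw [this]
      ring
    -- the two groups
    set P : Fin M → Fin (2 ^ r) := fun l => ⟨(l:ℕ), by have := l.isLt; omega⟩ with hP_def
    set Q : Fin M → Fin (2 ^ r) := fun l => ⟨M + (l:ℕ), by have := l.isLt; omega⟩ with hQ_def
    have hPval : ∀ l, ((P l : Fin (2 ^ r)) : ℕ) = (l:ℕ) := fun l => rfl
    have hQval : ∀ l, ((Q l : Fin (2 ^ r)) : ℕ) = M + (l:ℕ) := fun l => rfl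
    have hPblk : ∀ l, ((P l : Fin (2 ^ r)) : ℕ) < M := fun l => l.isLt
    have hQblk : ∀ l, ¬ (((Q l : Fin (2 ^ r)) : ℕ) < M) := by
      intro l; rw [hQval]; omega
    have hcross : ∀ l l', θ < G (P l) (Q l') := by
      intro l l'
      refine hsim _ _ (Or.inr (fun h => ?_))
      exact hQblk l' (h.mp (hPblk l))
    have hwithinP : ∀ l l', l ≠ l' → G (P l) (P l') < θ := by
      intro l l' hne
      refine hdis _ _ (fun h => hne ?_) (Iff.intro (fun _ => hPblk l') (fun _ => hPblk l))
      apply Fin.ext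
      have : ((P l : Fin (2 ^ r)) : ℕ) = ((P l' : Fin (2 ^ r)) : ℕ) := by rw [h]
      rw [hPval, hPval] at this
      exact this
    have hwithinQ : ∀ l l', l ≠ l' → G (Q l) (Q l') < θ := by
      intro l l' hne
      refine hdis _ _ (fun h => hne ?_)
        (Iff.intro (fun h' => absurd h' (hQblk l)) (fun h' => absurd h' (hQblk l')))
      apply Fin.ext
      have : ((Q l : Fin (2 ^ r)) : ℕ) = ((Q l' : Fin (2 ^ r)) : ℕ) := by rw [h]
      rw [hQval, hQval] at this
      omega
    -- case split on M
    rcases eq_or_lt_of_le hM with hM1 | hM2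
    · -- M = 1 : trivial bound
      have h2 : ((2:ℝ) ^ r) = ((2 ^ r : ℕ) : ℝ) := by push_cast; ring
      rw [h2, hn, ← hM1]
      have : (1:ℝ) ≤ (k:ℝ) := by exact_mod_cast hk
      push_cast
      linarith
    · -- main case
      have hM0' : (0:ℕ) < M := by omega
      have hne_univ : (univ : Finset (Fin M × Fin M)).Nonempty :=
        ⟨(⟨0, hM0'⟩, ⟨0, hM0'⟩), mem_univ _⟩
      set a : ℕ := Finset.sup' univ hne_univ (fun p : Fin M × Fin M => D (P p.1) (Q p.2))
        with ha_def
      have ha_le : ∀ l l', D (P l) (Q l') ≤ a := fun l l' =>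
        Finset.le_sup' (f := fun p : Fin M × Fin M => D (P p.1) (Q p.2)) (mem_univ (l, l'))
      obtain ⟨p0, -, ha_eq⟩ := Finset.exists_mem_eq_sup' hne_univ
        (fun p : Fin M × Fin M => D (P p.1) (Q p.2))
      have hDlt : ∀ (i j i' j' : Fin (2 ^ r)), θ < G i j → G i' j' < θ → D i j < D i' j' := by
        intro i j i' j' h1 h2
        rw [hGD] at h1 h2
        have : (D i j : ℝ) < (D i' j' : ℝ) := by linarith
        exact_mod_cast this
      have hge_P : ∀ l l', l ≠ l' → a + 1 ≤ D (P l) (P l') := by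
        intro l l' hne
        have h1 := hDlt (P p0.1) (Q p0.2) (P l) (P l') (hcross p0.1 p0.2) (hwithinP l l' hne)
        omega
      have hge_Q : ∀ l l', l ≠ l' → a + 1 ≤ D (Q l) (Q l') := by
        intro l l' hne
        have h1 := hDlt (P p0.1) (Q p0.2) (Q l) (Q l') (hcross p0.1 p0.2) (hwithinQ l l' hne)
        omega
      -- Plotkin-type bound on differences
      have key2 : (0:ℝ) ≤ ∑ t : Fin k, (∑ l : Fin M, (u (P l) t - u (Q l) t))^2 :=
        Finset.sum_nonneg (fun t _ => sq_nonneg _)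
      have expand : ∑ t : Fin k, (∑ l : Fin M, (u (P l) t - u (Q l) t))^2
          = ∑ l : Fin M, ∑ l' : Fin M,
              (G (P l) (P l') - G (P l) (Q l') - G (Q l) (P l') + G (Q l) (Q l')) := by
        have e1 : ∀ t ∈ (univ : Finset (Fin k)), (∑ l : Fin M, (u (P l) t - u (Q l) t))^2
            = ∑ l : Fin M, ∑ l' : Fin M,
                (u (P l) t - u (Q l) t) * (u (P l') t - u (Q l') t) := by
          intro t _
          rw [sq, Finset.sum_mul_sum]
        rw [Finset.sum_congr rfl e1, Finset.sum_comm]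
        refine Finset.sum_congr rfl (fun l _ => ?_)
        rw [Finset.sum_comm]
        refine Finset.sum_congr rfl (fun l' _ => ?_)
        have e2 : ∀ t ∈ (univ : Finset (Fin k)),
            (u (P l) t - u (Q l) t) * (u (P l') t - u (Q l') t)
              = u (P l) t * u (P l') t - u (P l) t * u (Q l') t
                - u (Q l) t * u (P l') t + u (Q l) t * u (Q l') t := by
          intro t _; ring
        rw [Finset.sum_congr rfl e2, Finset.sum_add_distrib, Finset.sum_sub_distrib,
          Finset.sum_sub_distrib]
      have hdiagbound : ∀ l : Fin M,
          G (P l) (P l) - G (P l) (Q l) - G (Q l) (P l) + G (Q l) (Q l) ≤ 4*(a:ℝ) := by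
        intro l
        rw [hGdiag, hGdiag, hGsymm (Q l) (P l), hGD (P l) (Q l)]
        have : (D (P l) (Q l) : ℝ) ≤ (a:ℝ) := by exact_mod_cast ha_le l l
        linarith
      have hoffbound : ∀ l l' : Fin M, l ≠ l' →
          G (P l) (P l') - G (P l) (Q l') - G (Q l) (P l') + G (Q l) (Q l') ≤ -4 := by
        intro l l' hne
        rw [hGD, hGD, hGD, hGD]
        have h1 : (D (P l) (Q l') : ℝ) ≤ (a:ℝ) := by exact_mod_cast ha_le l l'
        have h2 : (D (Q l) (P l') : ℝ) ≤ (a:ℝ) := by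
          rw [hDsymm]
          exact_mod_cast ha_le l' l
        have h3 : ((a:ℝ) + 1) ≤ (D (P l) (P l') : ℝ) := by exact_mod_cast hge_P l l' hne
        have h4 : ((a:ℝ) + 1) ≤ (D (Q l) (Q l') : ℝ) := by exact_mod_cast hge_Q l l' hne
        linarith
      have hMcast : ((M - 1 : ℕ) : ℝ) = (M:ℝ) - 1 := by
        rw [Nat.cast_sub hM]; norm_num
      have htotal : ∑ l : Fin M, ∑ l' : Fin M,
            (G (P l) (P l') - G (P l) (Q l') - G (Q l) (P l') + G (Q l) (Q l'))
          ≤ (M:ℝ) * (4*(a:ℝ) - 4*((M:ℝ) - 1)) := by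
        have hper : ∀ l : Fin M, ∑ l' : Fin M,
            (G (P l) (P l') - G (P l) (Q l') - G (Q l) (P l') + G (Q l) (Q l'))
            ≤ 4*(a:ℝ) - 4*((M:ℝ) - 1) := by
          intro l
          rw [← Finset.add_sum_erase (univ : Finset (Fin M))
            (fun l' => G (P l) (P l') - G (P l) (Q l') - G (Q l) (P l') + G (Q l) (Q l'))
            (mem_univ l)]
          have hrest : ∑ l' ∈ (univ : Finset (Fin M)).erase l,
              (G (P l) (P l') - G (P l) (Q l') - G (Q l) (P l') + G (Q l) (Q l'))
              ≤ ((univ : Finset (Fin M)).erase l).card • (-4 : ℝ) := by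
            refine Finset.sum_le_card_nsmul _ _ _ (fun l' hl' => ?_)
            exact hoffbound l l' (fun h => (Finset.ne_of_mem_erase hl') h.symm)
          rw [Finset.card_erase_of_mem (mem_univ l)] at hrest
          simp only [Finset.card_univ, Fintype.card_fin] at hrest
          rw [nsmul_eq_mul, hMcast] at hrest
          have := hdiagbound l
          linarith
        calc ∑ l : Fin M, ∑ l' : Fin M,
              (G (P l) (P l') - G (P l) (Q l') - G (Q l) (P l') + G (Q l) (Q l'))
            ≤ ∑ l : Fin M, (4*(a:ℝ) - 4*((M:ℝ) - 1)) := Finset.sum_le_sum (fun l _ => hper l)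
        _ = (M:ℝ) * (4*(a:ℝ) - 4*((M:ℝ) - 1)) := by
            rw [Finset.sum_const, Finset.card_univ, Fintype.card_fin, nsmul_eq_mul]
      -- conclude M - 1 ≤ a
      have hMa : (M:ℝ) - 1 ≤ (a:ℝ) := by
        rw [expand] at key2
        have hMposR : (0:ℝ) < (M:ℝ) := by exact_mod_cast hM0'
        nlinarith
      -- conclude M ≤ k
      have hak : a + 1 ≤ k := by
        have l0 : Fin M := ⟨0, hM0'⟩
        have l1 : Fin M := ⟨1, hM2⟩
        have h01 : (⟨0, hM0'⟩ : Fin M) ≠ ⟨1, hM2⟩ := Fin.ne_of_val_ne (by norm_num)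
        calc a + 1 ≤ D (P ⟨0, hM0'⟩) (P ⟨1, hM2⟩) := hge_P _ _ h01
        _ ≤ k := hD_le _ _
      have hMk : (M:ℝ) ≤ (k:ℝ) := by
        have h1 : M ≤ a + 1 := by
          have : (M:ℝ) ≤ (a:ℝ) + 1 := by linarith
          exact_mod_cast this
        have : M ≤ k := le_trans h1 hak
        exact_mod_cast this
      have h2 : ((2:ℝ) ^ r) = ((2 ^ r : ℕ) : ℝ) := by push_cast; ring
      rw [h2, hn]
      push_cast
      linarith
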